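/- There is a universal constant c > 0 with the following property. For every integer n ≥ 2, every ε ∈ (0, 1/2], every m ∈ ℕ and every randomized tester with known target A : P({1,…,n}) × {1,…,n}^m → [0,1]: if for every probability distribution p on {1,…,n}, E_{s∼p^{⊗m}}[A(p,s)] ≥ 2/3, and for all probability distributions p, q on {1,…,n} with ‖p−q‖₁ ≥ ε, E_{s∼q^{⊗m}}[1 − A(p,s)] ≥ 2/3, then m ≥ c·√n/ε². -/

import Mathlib

/-- `p` is a probability distribution on the finite set `X`. -/
def IsProb {X : Type*} [Fintype X] (p : X → ℝ) : Prop :=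
  (∀ x, 0 ≤ p x) ∧ ∑ x, p x = 1

/-- `M` is a coupling of `p` and `q`: a probability distribution on `X × X`
whose first marginal is `p` and second marginal is `q`. -/
def IsCoupling {X : Type*} [Fintype X] (p q : X → ℝ) (M : X × X → ℝ) : Prop :=
  (∀ z, 0 ≤ M z) ∧ (∀ x, ∑ y, M (x, y) = p x) ∧ (∀ y, ∑ x, M (x, y) = q y)

/-- The Wasserstein (transportation) distance between `p` and `q` with respect to the
cost function `c`: the infimum, over all couplings `M` of `p` and `q`, of the expected cost. -/
noncomputable def wassersteinDist {X : Type*} [Fintype X] (c : X → X → ℝ) (p q : X → ℝ) : ℝ :=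
  sInf {w : ℝ | ∃ M : X × X → ℝ, IsCoupling p q M ∧ w = ∑ z : X × X, M z * c z.1 z.2}

/-- The `L₁` distance between two distributions on a finite set. -/
noncomputable def l1Dist {X : Type*} [Fintype X] (p q : X → ℝ) : ℝ :=
  ∑ x, |p x - q x|

/-- The expected value of `A s` when the `m` samples `s` are drawn i.i.d. from the
distribution `q` on the finite set `X`; for a randomized tester `A` taking values in
`[0,1]`, this is its acceptance probability under `q`. -/
noncomputable def expectedVal {X : Type*} [Fintype X] (q : X → ℝ) {m : ℕ}
    (A : (Fin m → X) → ℝ) : ℝ :=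
  ∑ s : Fin m → X, (∏ i, q (s i)) * A s

section
open Finset

namespace L1LB

noncomputable def ζ (b : Bool) : ℝ := if b then 1 else -1

lemma ζ_abs (b : Bool) : |ζ b| = 1 := by cases b <;> simp [ζ]

lemma ζ_sq (b : Bool) : ζ b * ζ b = 1 := by cases b <;> norm_num [ζ]

/-- perturbation function -/
noncomputable def pert (k : ℕ) (δ : ℝ) (z : Fin k → Bool) (j : ℕ) : ℝ :=
  if h : j / 2 < k then δ * (if j % 2 = 0 then 1 else -1) * ζ (z ⟨j / 2, h⟩) else 0

lemma pert_even (k : ℕ) (δ : ℝ) (z : Fin k → Bool) (i : Fin k) :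
    pert k δ z (2 * i.val) = δ * ζ (z i) := by
  have h1 : 2 * i.val / 2 = i.val := by omega
  have h2 : 2 * i.val % 2 = 0 := by omega
  have h : 2 * i.val / 2 < k := by omega
  have hz : (⟨2 * i.val / 2, h⟩ : Fin k) = i := Fin.ext h1
  simp only [pert, dif_pos h, h2, hz]
  norm_num

lemma pert_odd (k : ℕ) (δ : ℝ) (z : Fin k → Bool) (i : Fin k) :
    pert k δ z (2 * i.val + 1) = -(δ * ζ (z i)) := by
  have h1 : (2 * i.val + 1) / 2 = i.val := by omega
  have h2 : (2 * i.val + 1) % 2 = 1 := by omega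
  have h : (2 * i.val + 1) / 2 < k := by omega
  have hz : (⟨(2 * i.val + 1) / 2, h⟩ : Fin k) = i := Fin.ext h1
  simp only [pert, dif_pos h, h2, hz]
  norm_num

lemma pert_high (k : ℕ) (δ : ℝ) (z : Fin k → Bool) (j : ℕ) (hj : ¬ j / 2 < k) :
    pert k δ z j = 0 := dif_neg hj

lemma pert_abs_le (k : ℕ) (δ : ℝ) (hδ : 0 ≤ δ) (z : Fin k → Bool) (j : ℕ) :
    |pert k δ z j| ≤ δ := by
  unfold pert
  split
  · rw [abs_mul, abs_mul, ζ_abs, mul_one]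
    split <;> simp [abs_of_nonneg hδ, hδ]
  · simpa using hδ

lemma sum_range_pair (k : ℕ) (h : ℕ → ℝ) :
    ∑ j ∈ range (2 * k), h j = ∑ i ∈ range k, (h (2 * i) + h (2 * i + 1)) := by
  induction k with
  | zero => simp
  | succ k ih =>
      have : 2 * (k + 1) = (2 * k + 1) + 1 := by ring
      rw [this, sum_range_succ, sum_range_succ, ih, sum_range_succ]
      ring

/-- sum over Fin n of a function of j with pairing structure -/
lemma sum_fin_pairs (n k : ℕ) (hk : 2 * k ≤ n) (g : ℕ → ℝ)
    (hg : ∀ j, ¬ j / 2 < k → g j = 0) :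
    ∑ x : Fin n, g x.val = ∑ i : Fin k, (g (2 * i.val) + g (2 * i.val + 1)) := by
  rw [Fin.sum_univ_eq_sum_range (fun j => g j) n,
    Fin.sum_univ_eq_sum_range (fun i => g (2 * i) + g (2 * i + 1)) k, ← sum_range_pair]
  symm
  apply sum_subset
  · exact range_subset_range.mpr hk
  · intro j _ hj
    apply hg
    rw [mem_range] at hj
    omega


variable {n k : ℕ} {δ : ℝ}

lemma sum_pert (hk : 2 * k ≤ n) (z : Fin k → Bool) :
    ∑ x : Fin n, pert k δ z x.val = 0 := by
  rw [sum_fin_pairs n k hk _ (fun j hj => pert_high k δ z j hj)]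
  simp [pert_even, pert_odd]

lemma sum_abs_pert (hk : 2 * k ≤ n) (hδ : 0 ≤ δ) (z : Fin k → Bool) :
    ∑ x : Fin n, |pert k δ z x.val| = 2 * k * δ := by
  rw [sum_fin_pairs n k hk (fun j => |pert k δ z j|) (fun j hj => by show |pert k δ z j| = 0; rw [pert_high k δ z j hj, abs_zero])]
  have : ∀ i : Fin k, |pert k δ z (2 * i.val)| + |pert k δ z (2 * i.val + 1)| = 2 * δ := by
    intro i
    rw [pert_even, pert_odd, abs_neg, abs_mul, ζ_abs, abs_of_nonneg hδ]
    ring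
  rw [Finset.sum_congr rfl (fun i _ => this i)]
  simp [mul_comm, mul_assoc]
  ring

lemma sum_pert_mul (hk : 2 * k ≤ n) (z z' : Fin k → Bool) :
    ∑ x : Fin n, pert k δ z x.val * pert k δ z' x.val
      = 2 * δ ^ 2 * ∑ i : Fin k, ζ (z i) * ζ (z' i) := by
  rw [sum_fin_pairs n k hk (fun j => pert k δ z j * pert k δ z' j) (fun j hj => by show pert k δ z j * pert k δ z' j = 0; rw [pert_high k δ z j hj, zero_mul])]
  have : ∀ i : Fin k, pert k δ z (2 * i.val) * pert k δ z' (2 * i.val)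
      + pert k δ z (2 * i.val + 1) * pert k δ z' (2 * i.val + 1)
      = 2 * δ ^ 2 * (ζ (z i) * ζ (z' i)) := by
    intro i
    rw [pert_even, pert_odd, pert_even, pert_odd]
    ring
  rw [Finset.sum_congr rfl (fun i _ => this i), ← Finset.mul_sum]

noncomputable def pz (n k : ℕ) (δ : ℝ) (z : Fin k → Bool) : Fin n → ℝ :=
  fun x => (1 + pert k δ z x.val) / n

noncomputable def unif (n : ℕ) : Fin n → ℝ := fun _ => 1 / n

lemma one_add_pert_nonneg (hδ : 0 ≤ δ) (hδ1 : δ ≤ 1) (z : Fin k → Bool) (j : ℕ) :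
    0 ≤ 1 + pert k δ z j := by
  have := abs_le.mp (pert_abs_le k δ hδ z j)
  linarith

lemma isProb_pz (hn : 0 < n) (hk : 2 * k ≤ n) (hδ : 0 ≤ δ) (hδ1 : δ ≤ 1) (z : Fin k → Bool) :
    IsProb (pz n k δ z) := by
  constructor
  · intro x
    exact div_nonneg (one_add_pert_nonneg hδ hδ1 z x.val) (by positivity)
  · have hn0 : (n : ℝ) ≠ 0 := by positivity
    simp only [pz]
    rw [← Finset.sum_div, Finset.sum_add_distrib, sum_pert hk]
    simp [hn0]

lemma isProb_unif (hn : 0 < n) : IsProb (unif n) := by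
  have hn0 : (n : ℝ) ≠ 0 := Nat.cast_ne_zero.mpr hn.ne'
  refine ⟨fun x => by unfold unif; positivity, ?_⟩
  simp [unif, hn0]

lemma l1Dist_unif_pz (hn : 0 < n) (hk : 2 * k ≤ n) (hδ : 0 ≤ δ) (z : Fin k → Bool) :
    l1Dist (unif n) (pz n k δ z) = 2 * k * δ / n := by
  have hn0 : (0:ℝ) < n := by positivity
  unfold l1Dist unif pz
  have : ∀ x : Fin n, |1 / (n:ℝ) - (1 + pert k δ z x.val) / n| = |pert k δ z x.val| / n := by
    intro x
    rw [div_sub_div_same, abs_div, abs_of_pos hn0]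
    congr 1
    rw [← abs_neg]
    congr 1
    ring
  rw [Finset.sum_congr rfl (fun x _ => this x), ← Finset.sum_div, sum_abs_pert hk hδ]

/-- the crucial per-sample cross term -/
lemma cross_sum (hn : 0 < n) (hk : 2 * k ≤ n) (z z' : Fin k → Bool) :
    (n : ℝ) * ∑ x : Fin n, pz n k δ z x * pz n k δ z' x
      = 1 + (2 * δ ^ 2 / n) * ∑ i : Fin k, ζ (z i) * ζ (z' i) := by
  have hn0 : (n : ℝ) ≠ 0 := Nat.cast_ne_zero.mpr hn.ne'
  have expand : ∀ x : Fin n, pz n k δ z x * pz n k δ z' x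
      = (1 + pert k δ z x.val + pert k δ z' x.val
         + pert k δ z x.val * pert k δ z' x.val) / (n^2 : ℝ) := by
    intro x
    unfold pz
    field_simp
    ring
  rw [Finset.sum_congr rfl (fun x _ => expand x), ← Finset.sum_div]
  have : ∑ x : Fin n, (1 + pert k δ z x.val + pert k δ z' x.val
        + pert k δ z x.val * pert k δ z' x.val)
      = n + 2 * δ ^ 2 * ∑ i : Fin k, ζ (z i) * ζ (z' i) := by
    simp only [Finset.sum_add_distrib, sum_pert hk, sum_pert_mul hk]
    simp
  rw [this]
  field_simp


lemma exp_quad_bound {a : ℝ} (h0 : 0 ≤ a) (h1 : a ≤ 1) :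
    Real.exp a ≤ 1 + a + (3/4) * a^2 := by
  have hb := Real.exp_bound (x := a) (by rw [abs_of_nonneg h0]; exact h1) (n := 2) (by norm_num)
  rw [abs_of_nonneg h0] at hb
  have h2 : ∑ m ∈ range 2, a ^ m / m.factorial = 1 + a := by
    simp [Finset.sum_range_succ]
  rw [h2] at hb
  have h4 := (abs_sub_le_iff.mp hb).1
  norm_num [Nat.factorial] at h4
  nlinarith

lemma cosh_quad_bound {a : ℝ} (h0 : 0 ≤ a) (h1 : a ≤ 1) :
    Real.exp a + Real.exp (-a) ≤ 2 + 2 * a^2 := by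
  have hp := exp_quad_bound h0 h1
  have hb := Real.exp_bound (x := -a) (by rw [abs_neg, abs_of_nonneg h0]; exact h1)
    (n := 2) (by norm_num)
  rw [abs_neg, abs_of_nonneg h0] at hb
  have h2 : ∑ m ∈ range 2, (-a) ^ m / m.factorial = 1 - a := by
    simp [Finset.sum_range_succ]
    ring
  rw [h2] at hb
  have hm := (abs_sub_le_iff.mp hb).1
  norm_num [Nat.factorial] at hm
  nlinarith

lemma exp_lin_bound {x : ℝ} (h0 : 0 ≤ x) (h1 : x ≤ 1) : Real.exp x ≤ 1 + 2 * x := by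
  have := exp_quad_bound h0 h1
  nlinarith

lemma one_add_pow_le_exp {y : ℝ} (h : 0 ≤ 1 + y) (M : ℕ) :
    (1 + y) ^ M ≤ Real.exp (M * y) := by
  calc (1 + y) ^ M ≤ (Real.exp y) ^ M := by
        apply pow_le_pow_left₀ h
        rw [add_comm]
        exact Real.add_one_le_exp y
    _ = Real.exp (M * y) := by rw [← Real.exp_nat_mul]

lemma sum_pairs_exp (k : ℕ) (a : ℝ) :
    ∑ z : Fin k → Bool, ∑ z' : Fin k → Bool, Real.exp (a * ∑ i, ζ (z i) * ζ (z' i))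
      = (2 * (Real.exp a + Real.exp (-a))) ^ k := by
  have step1 : ∀ (z z' : Fin k → Bool),
      Real.exp (a * ∑ i, ζ (z i) * ζ (z' i)) = ∏ i, Real.exp (a * (ζ (z i) * ζ (z' i))) := by
    intro z z'
    rw [← Real.exp_sum, Finset.mul_sum]
  simp only [step1]
  rw [← Fintype.sum_prod_type']
  rw [← Equiv.sum_comp (Equiv.arrowProdEquivProdArrow (Fin k) (fun _ => Bool) (fun _ => Bool))
    (fun p : (Fin k → Bool) × (Fin k → Bool) =>
      ∏ i, Real.exp (a * (ζ (p.1 i) * ζ (p.2 i))))]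
  simp only [Equiv.arrowProdEquivProdArrow, Equiv.coe_fn_mk]
  rw [← Fintype.prod_sum (fun (_ : Fin k) (bb : Bool × Bool) =>
    Real.exp (a * (ζ bb.1 * ζ bb.2)))]
  rw [Finset.prod_const, Finset.card_univ, Fintype.card_fin]
  congr 1
  rw [Fintype.sum_prod_type]
  simp [ζ]
  ring


lemma abs_sum_ζ_le (k : ℕ) (z z' : Fin k → Bool) :
    |∑ i, ζ (z i) * ζ (z' i)| ≤ (k : ℝ) := by
  calc |∑ i, ζ (z i) * ζ (z' i)| ≤ ∑ i, |ζ (z i) * ζ (z' i)| :=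
        Finset.abs_sum_le_sum_abs _ _
    _ = (k : ℝ) := by simp [abs_mul, ζ_abs]

lemma mixture_bound (k m : ℕ) (t : ℝ) (ht : 0 ≤ t) (htk : t * k ≤ 1) (hmt : (m:ℝ) * t ≤ 1) :
    (∑ z : Fin k → Bool, ∑ z' : Fin k → Bool, (1 + t * ∑ i, ζ (z i) * ζ (z' i)) ^ m) / 4 ^ k
      ≤ Real.exp (k * ((m:ℝ) * t) ^ 2) := by
  set a : ℝ := (m:ℝ) * t with ha
  have ha0 : 0 ≤ a := mul_nonneg (Nat.cast_nonneg m) ht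
  have hpt : ∀ z z' : Fin k → Bool,
      (1 + t * ∑ i, ζ (z i) * ζ (z' i)) ^ m
        ≤ Real.exp (a * ∑ i, ζ (z i) * ζ (z' i)) := by
    intro z z'
    have hW := abs_sum_ζ_le k z z'
    have habs : |t * ∑ i, ζ (z i) * ζ (z' i)| ≤ 1 := by
      rw [abs_mul, abs_of_nonneg ht]
      calc t * |∑ i, ζ (z i) * ζ (z' i)| ≤ t * k := by
            exact mul_le_mul_of_nonneg_left hW ht
        _ ≤ 1 := htk
    have hge : 0 ≤ 1 + t * ∑ i, ζ (z i) * ζ (z' i) := by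
      have := (abs_le.mp habs).1
      linarith
    calc (1 + t * ∑ i, ζ (z i) * ζ (z' i)) ^ m
        ≤ Real.exp ((m:ℝ) * (t * ∑ i, ζ (z i) * ζ (z' i))) := one_add_pow_le_exp hge m
      _ = Real.exp (a * ∑ i, ζ (z i) * ζ (z' i)) := by rw [ha, mul_assoc]
  have hsum : (∑ z : Fin k → Bool, ∑ z' : Fin k → Bool,
        (1 + t * ∑ i, ζ (z i) * ζ (z' i)) ^ m)
      ≤ (2 * (Real.exp a + Real.exp (-a))) ^ k := by
    rw [← sum_pairs_exp k a]
    exact Finset.sum_le_sum fun z _ => Finset.sum_le_sum fun z' _ => hpt z z'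
  have h4 : (0:ℝ) < 4 ^ k := by positivity
  calc (∑ z : Fin k → Bool, ∑ z' : Fin k → Bool,
          (1 + t * ∑ i, ζ (z i) * ζ (z' i)) ^ m) / 4 ^ k
      ≤ (2 * (Real.exp a + Real.exp (-a))) ^ k / 4 ^ k := by gcongr
    _ = ((Real.exp a + Real.exp (-a)) / 2) ^ k := by
        rw [← div_pow]; congr 1; ring
    _ ≤ (1 + a ^ 2) ^ k := by
        apply pow_le_pow_left₀ (by positivity)
        have := cosh_quad_bound ha0 hmt
        linarith
    _ ≤ Real.exp (k * a ^ 2) := by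
        have h5 := one_add_pow_le_exp (y := a ^ 2) (by positivity) k
        calc (1 + a ^ 2) ^ k ≤ Real.exp (↑k * a ^ 2) := h5
          _ = Real.exp (↑k * a ^ 2) := rfl
        
lemma key_x {x : ℝ} (hx : 0 ≤ x) (h : 1/9 ≤ Real.exp x - 1) : 1/18 ≤ x := by
  by_cases h1 : x ≤ 1
  · have := exp_lin_bound hx h1
    linarith
  · linarith [not_le.mp h1]


end L1LB
end

open L1LB Finset in
set_option maxHeartbeats 2000000 in
/-- L₁ identity testing lower bound on `[n]`: there is a universal constant `c > 0` such
that for every `n ≥ 2`, `ε ∈ (0,1/2]` and randomized identity tester with known target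
`A : P([n]) × [n]^m → [0,1]` that accepts every true target with probability `≥ 2/3` and
rejects with probability `≥ 2/3` whenever `‖p−q‖₁ ≥ ε`, one has `m ≥ c·√n/ε²`. -/
theorem l1_identity_testing_lower_bound :
    ∃ c : ℝ, 0 < c ∧ ∀ n : ℕ, 2 ≤ n → ∀ ε : ℝ, 0 < ε → ε ≤ 1 / 2 →
      ∀ (m : ℕ) (A : (Fin n → ℝ) → (Fin m → Fin n) → ℝ),
        (∀ (p : Fin n → ℝ) (s : Fin m → Fin n), IsProb p → 0 ≤ A p s ∧ A p s ≤ 1) →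
        (∀ p : Fin n → ℝ, IsProb p → 2 / 3 ≤ expectedVal p (A p)) →
        (∀ p q : Fin n → ℝ, IsProb p → IsProb q → ε ≤ l1Dist p q →
          2 / 3 ≤ expectedVal q (fun s => 1 - A p s)) →
        c * Real.sqrt n / ε ^ 2 ≤ (m : ℝ) := by
  refine ⟨1/100, by norm_num, ?_⟩
  intro n hn2 ε hε hε2 m A hbound hcompl hsound
  -- setup
  set k : ℕ := n / 2 with hkdef
  have hk1 : 1 ≤ k := by omega
  have hk2 : 2 * k ≤ n := by omega
  have hk4 : n ≤ 4 * k := by omega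
  have hk3 : n ≤ 3 * k := by omega
  have hn0 : 0 < n := by omega
  have hnR : (0:ℝ) < n := by exact_mod_cast hn0
  have hn2R : (2:ℝ) ≤ n := by exact_mod_cast hn2
  have hkR : (0:ℝ) < k := by exact_mod_cast hk1
  have hkR2 : 2 * (k:ℝ) ≤ n := by exact_mod_cast hk2
  have hkR4 : (n:ℝ) ≤ 4 * k := by exact_mod_cast hk4
  have hkR3 : (n:ℝ) ≤ 3 * k := by exact_mod_cast hk3
  set δ : ℝ := ε * n / (2 * k) with hδdef
  have hδ0 : 0 < δ := by positivity
  have hδ2ε : δ ≤ 2 * ε := by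
    rw [hδdef, div_le_iff₀ (by positivity)]
    nlinarith only [hkR4, hε]
  have hδ1 : δ ≤ 1 := by linarith
  set t : ℝ := 2 * δ ^ 2 / n with htdef
  have ht0 : 0 < t := by positivity
  have hε4 : ε ^ 2 ≤ 1/4 := by nlinarith only [hε, hε2]
  have htk : t * k ≤ 1 := by
    have heq : t * k = ε ^ 2 * n / (2 * k) := by
      rw [htdef, hδdef]; field_simp
    rw [heq, div_le_one (by positivity)]
    nlinarith only [mul_le_mul_of_nonneg_right hε4 hnR.le, hkR4]
  -- the distributions
  set u := unif n with hudef
  have hu : IsProb u := isProb_unif hn0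
  have hpz : ∀ z : Fin k → Bool, IsProb (pz n k δ z) :=
    fun z => isProb_pz hn0 hk2 hδ0.le hδ1 z
  have hl1 : ∀ z : Fin k → Bool, ε ≤ l1Dist u (pz n k δ z) := by
    intro z
    rw [hudef, l1Dist_unif_pz hn0 hk2 hδ0.le z, hδdef]
    have : 2 * (k:ℝ) * (ε * n / (2 * k)) / n = ε := by field_simp
    rw [this]
  -- tester facts
  have hA0 : ∀ s, 0 ≤ A u s := fun s => (hbound u s hu).1
  have hA1 : ∀ s, A u s ≤ 1 := fun s => (hbound u s hu).2
  have h1 : 2/3 ≤ ∑ s : Fin m → Fin n, (∏ i, u (s i)) * A u s := hcompl u hu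
  have hpzsum : ∀ z : Fin k → Bool, ∑ s : Fin m → Fin n, (∏ i, pz n k δ z (s i)) = 1 := by
    intro z
    rw [← Fintype.sum_pow, (hpz z).2, one_pow]
  have h2 : ∀ z : Fin k → Bool,
      ∑ s : Fin m → Fin n, (∏ i, pz n k δ z (s i)) * A u s ≤ 1/3 := by
    intro z
    have hs := hsound u (pz n k δ z) hu (hpz z) (hl1 z)
    simp only [expectedVal] at hs
    have expand : ∑ s : Fin m → Fin n, (∏ i, pz n k δ z (s i)) * (1 - A u s)
        = 1 - ∑ s : Fin m → Fin n, (∏ i, pz n k δ z (s i)) * A u s := by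
      calc ∑ s : Fin m → Fin n, (∏ i, pz n k δ z (s i)) * (1 - A u s)
          = ∑ s : Fin m → Fin n,
              ((∏ i, pz n k δ z (s i)) - (∏ i, pz n k δ z (s i)) * A u s) :=
            Finset.sum_congr rfl (fun s _ => by ring)
        _ = (∑ s : Fin m → Fin n, ∏ i, pz n k δ z (s i))
            - ∑ s : Fin m → Fin n, (∏ i, pz n k δ z (s i)) * A u s :=
            Finset.sum_sub_distrib _ _
        _ = 1 - ∑ s : Fin m → Fin n, (∏ i, pz n k δ z (s i)) * A u s := by
            rw [hpzsum z]
    rw [expand] at hs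
    linarith only [hs]
  -- mixture
  set Q : (Fin m → Fin n) → ℝ :=
    fun s => (∑ z : Fin k → Bool, ∏ i, pz n k δ z (s i)) / 2 ^ k with hQdef
  have hcard : (Fintype.card (Fin k → Bool) : ℝ) = 2 ^ k := by
    simp [Fintype.card_fun]
  have hQA : ∑ s : Fin m → Fin n, Q s * A u s ≤ 1/3 := by
    have swap : ∑ s : Fin m → Fin n, Q s * A u s
        = (∑ z : Fin k → Bool, ∑ s : Fin m → Fin n,
            (∏ i, pz n k δ z (s i)) * A u s) / 2 ^ k := by
      calc ∑ s : Fin m → Fin n, Q s * A u s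
          = ∑ s : Fin m → Fin n,
              (∑ z : Fin k → Bool, (∏ i, pz n k δ z (s i)) * A u s) / 2 ^ k :=
            Finset.sum_congr rfl (fun s _ => by
              rw [hQdef, div_mul_eq_mul_div, Finset.sum_mul])
        _ = (∑ s : Fin m → Fin n, ∑ z : Fin k → Bool,
              (∏ i, pz n k δ z (s i)) * A u s) / 2 ^ k := by
            rw [Finset.sum_div]
        _ = (∑ z : Fin k → Bool, ∑ s : Fin m → Fin n,
              (∏ i, pz n k δ z (s i)) * A u s) / 2 ^ k := by
            rw [Finset.sum_comm]
    rw [swap, div_le_iff₀ (by positivity)]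
    calc ∑ z : Fin k → Bool, ∑ s : Fin m → Fin n, (∏ i, pz n k δ z (s i)) * A u s
        ≤ ∑ _z : Fin k → Bool, (1/3 : ℝ) := Finset.sum_le_sum (fun z _ => h2 z)
      _ = 1/3 * 2 ^ k := by rw [Finset.sum_const, nsmul_eq_mul, Finset.card_univ, hcard]; ring
  have hQsum : ∑ s : Fin m → Fin n, Q s = 1 := by
    rw [hQdef, ← Finset.sum_div, Finset.sum_comm]
    rw [Finset.sum_congr rfl (fun z _ => hpzsum z)]
    rw [Finset.sum_const, nsmul_eq_mul, Finset.card_univ, hcard, mul_one, div_self (by positivity)]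
  have huprod : ∀ s : Fin m → Fin n, ∏ i, u (s i) = (1/(n:ℝ)) ^ m := by
    intro s; rw [hudef]; simp [unif]
  have hucard : (Fintype.card (Fin m → Fin n) : ℝ) = (n:ℝ) ^ m := by
    simp [Fintype.card_fun]
  -- TV lower bound
  set c : (Fin m → Fin n) → ℝ := fun s => (1/(n:ℝ)) ^ m - Q s with hcdef
  have h3 : 1/3 ≤ ∑ s : Fin m → Fin n, c s * A u s := by
    have : ∑ s : Fin m → Fin n, c s * A u s
        = (∑ s : Fin m → Fin n, (∏ i, u (s i)) * A u s)
          - ∑ s : Fin m → Fin n, Q s * A u s := by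
      rw [← Finset.sum_sub_distrib]
      apply Finset.sum_congr rfl
      intro s _
      rw [hcdef, huprod s]; ring
    rw [this]
    linarith only [h1, hQA]
  have h4 : 1/3 ≤ ∑ s : Fin m → Fin n, |c s| := by
    refine le_trans h3 (Finset.sum_le_sum ?_)
    intro s _
    calc c s * A u s ≤ |c s| * A u s :=
          mul_le_mul_of_nonneg_right (le_abs_self _) (hA0 s)
      _ ≤ |c s| * 1 := mul_le_mul_of_nonneg_left (hA1 s) (abs_nonneg _)
      _ = |c s| := mul_one _
  -- Cauchy-Schwarz
  have hrm : ((Real.sqrt n) ^ m) ^ 2 = (n:ℝ) ^ m := by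
    rw [← pow_mul, mul_comm, pow_mul, Real.sq_sqrt hnR.le]
  have hr0 : (0:ℝ) < (Real.sqrt n) ^ m := by positivity
  have h5 : (∑ s : Fin m → Fin n, |c s|) ^ 2
      ≤ ∑ s : Fin m → Fin n, c s ^ 2 * (n:ℝ) ^ m := by
    have cs := Finset.sum_mul_sq_le_sq_mul_sq Finset.univ
      (fun s : Fin m → Fin n => |c s| * (Real.sqrt n) ^ m)
      (fun _ => ((Real.sqrt n) ^ m)⁻¹)
    have e1 : ∀ s : Fin m → Fin n,
        (|c s| * (Real.sqrt n) ^ m) * ((Real.sqrt n) ^ m)⁻¹ = |c s| := by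
      intro s; field_simp
    have e2 : ∀ s : Fin m → Fin n,
        (|c s| * (Real.sqrt n) ^ m) ^ 2 = c s ^ 2 * (n:ℝ) ^ m := by
      intro s; rw [mul_pow, sq_abs, hrm]
    have e3 : ∑ _s : Fin m → Fin n, (((Real.sqrt n) ^ m)⁻¹) ^ 2 = 1 := by
      rw [Finset.sum_const, nsmul_eq_mul, Finset.card_univ, hucard, ← inv_pow, ← hrm]
      field_simp
      rw [← mul_pow, ← mul_pow, mul_one_div_cancel (Real.sqrt_pos.mpr hnR).ne', one_pow, one_pow]
    rw [Finset.sum_congr rfl (fun s _ => e1 s), Finset.sum_congr rfl (fun s _ => e2 s)] at cs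
    calc (∑ s : Fin m → Fin n, |c s|) ^ 2
        ≤ (∑ s : Fin m → Fin n, c s ^ 2 * (n:ℝ) ^ m)
          * ∑ _s : Fin m → Fin n, (((Real.sqrt n) ^ m)⁻¹) ^ 2 := cs
      _ = ∑ s : Fin m → Fin n, c s ^ 2 * (n:ℝ) ^ m := by rw [e3, mul_one]
  -- chi-square identity
  set V : ℝ := (∑ z : Fin k → Bool, ∑ z' : Fin k → Bool,
      (1 + t * ∑ i, ζ (z i) * ζ (z' i)) ^ m) / 4 ^ k with hVdef
  have h2k4 : ((2:ℝ) ^ k) * ((2:ℝ) ^ k) = 4 ^ k := by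
    rw [← pow_add]
    have : k + k = 2 * k := by ring
    rw [this, pow_mul]
    norm_num
  set N : ℝ := (n:ℝ) ^ m with hNdef
  have hNpos : 0 < N := by positivity
  have hinv : (1/(n:ℝ)) ^ m = N⁻¹ := by rw [hNdef, ← inv_pow, one_div]
  have key : ∀ z z' : Fin k → Bool,
      (∑ s : Fin m → Fin n, ∏ i, pz n k δ z (s i) * pz n k δ z' (s i)) * N
        = (1 + t * ∑ i, ζ (z i) * ζ (z' i)) ^ m := by
    intro z z'
    rw [← Fintype.sum_pow (fun x => pz n k δ z x * pz n k δ z' x) m, hNdef, ← mul_pow]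
    congr 1
    rw [mul_comm]
    simp only [htdef]
    exact cross_sum hn0 hk2 z z'
  have hQ2 : ∀ s : Fin m → Fin n, Q s ^ 2 * N
      = (∑ z : Fin k → Bool, ∑ z' : Fin k → Bool,
          (∏ i, pz n k δ z (s i) * pz n k δ z' (s i)) * N) / 4 ^ k := by
    intro s
    calc Q s ^ 2 * N
        = ((∑ z : Fin k → Bool, ∏ i, pz n k δ z (s i))
            * (∑ z' : Fin k → Bool, ∏ i, pz n k δ z' (s i))) * N / 4 ^ k := by
          rw [hQdef]
          simp only [sq]
          rw [div_mul_div_comm, h2k4, div_mul_eq_mul_div]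
      _ = (∑ z : Fin k → Bool, ∑ z' : Fin k → Bool,
            (∏ i, pz n k δ z (s i)) * (∏ i, pz n k δ z' (s i))) * N / 4 ^ k := by
          rw [Finset.sum_mul_sum]
      _ = (∑ z : Fin k → Bool, ∑ z' : Fin k → Bool,
            (∏ i, pz n k δ z (s i) * pz n k δ z' (s i)) * N) / 4 ^ k := by
          congr 1
          rw [Finset.sum_mul]
          refine Finset.sum_congr rfl fun z _ => ?_
          rw [Finset.sum_mul]
          refine Finset.sum_congr rfl fun z' _ => ?_
          rw [Finset.prod_mul_distrib]
  have hQ2sum : ∑ s : Fin m → Fin n, Q s ^ 2 * N = V := by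
    calc ∑ s : Fin m → Fin n, Q s ^ 2 * N
        = (∑ s : Fin m → Fin n, ∑ z : Fin k → Bool, ∑ z' : Fin k → Bool,
            (∏ i, pz n k δ z (s i) * pz n k δ z' (s i)) * N) / 4 ^ k := by
          rw [Finset.sum_congr rfl fun s _ => hQ2 s, Finset.sum_div]
      _ = (∑ z : Fin k → Bool, ∑ z' : Fin k → Bool, ∑ s : Fin m → Fin n,
            (∏ i, pz n k δ z (s i) * pz n k δ z' (s i)) * N) / 4 ^ k := by
          congr 1
          rw [Finset.sum_comm]
          refine Finset.sum_congr rfl fun z _ => ?_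
          rw [Finset.sum_comm]
      _ = (∑ z : Fin k → Bool, ∑ z' : Fin k → Bool,
            (1 + t * ∑ i, ζ (z i) * ζ (z' i)) ^ m) / 4 ^ k := by
          congr 1
          refine Finset.sum_congr rfl fun z _ => ?_
          refine Finset.sum_congr rfl fun z' _ => ?_
          rw [← Finset.sum_mul]
          exact key z z'
      _ = V := by rw [hVdef]
  have h6 : ∑ s : Fin m → Fin n, c s ^ 2 * N = V - 1 := by
    have hptw : ∀ s : Fin m → Fin n,
        c s ^ 2 * N = (N⁻¹ - 2 * Q s) + Q s ^ 2 * N := by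
      intro s
      rw [hcdef]
      simp only [hinv]
      field_simp
      ring
    calc ∑ s : Fin m → Fin n, c s ^ 2 * N
        = ∑ s : Fin m → Fin n, ((N⁻¹ - 2 * Q s) + Q s ^ 2 * N) :=
          Finset.sum_congr rfl fun s _ => hptw s
      _ = ((∑ _s : Fin m → Fin n, N⁻¹) - 2 * ∑ s : Fin m → Fin n, Q s)
          + ∑ s : Fin m → Fin n, Q s ^ 2 * N := by
          rw [Finset.sum_add_distrib, Finset.sum_sub_distrib, Finset.mul_sum]
      _ = (1 - 2 * 1) + V := by
          rw [hQsum, hQ2sum, Finset.sum_const, nsmul_eq_mul, Finset.card_univ, hucard,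
            mul_inv_cancel₀ hNpos.ne']
      _ = V - 1 := by ring
  -- conclude
  have h7 : 1/9 ≤ V - 1 := by
    rw [h6] at h5
    have hD2 : ((1:ℝ)/3)^2 ≤ (∑ s : Fin m → Fin n, |c s|)^2 :=
      pow_le_pow_left₀ (by norm_num) h4 2
    calc (1/9:ℝ) = (1/3)^2 := by norm_num
      _ ≤ (∑ s : Fin m → Fin n, |c s|)^2 := hD2
      _ ≤ V - 1 := h5
  have hm0 : (0:ℝ) ≤ m := Nat.cast_nonneg m
  have hsqn : Real.sqrt n ≤ n := by
    have h1 : (n:ℝ) ≤ ((n:ℝ))^2 := by nlinarith only [hnR, hn2R]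
    calc Real.sqrt n ≤ Real.sqrt ((n:ℝ)^2) := Real.sqrt_le_sqrt h1
      _ = n := Real.sqrt_sq hnR.le
  have hsqn0 : (0:ℝ) ≤ Real.sqrt n := Real.sqrt_nonneg _
  by_cases hcase : (m:ℝ) * t ≤ 1
  · -- main case
    have hV : V ≤ Real.exp (k * ((m:ℝ) * t) ^ 2) := by
      rw [hVdef]
      exact mixture_bound k m t ht0.le htk hcase
    have hx : 1/18 ≤ (k:ℝ) * ((m:ℝ) * t) ^ 2 := key_x (by positivity) (by linarith only [h7, hV])
    have hexpand : (k:ℝ) * ((m:ℝ) * t) ^ 2 = (m:ℝ)^2 * ε^4 * n^2 / (4 * (k:ℝ)^3) := by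
      simp only [htdef, hδdef]
      field_simp
      ring
    rw [hexpand] at hx
    rw [le_div_iff₀ (by positivity)] at hx
    have hkcube : ((n:ℝ))^3 / 27 ≤ (k:ℝ)^3 := by
      have hc1 : ((n:ℝ))^3 ≤ (3*(k:ℝ))^3 := pow_le_pow_left₀ hnR.le hkR3 3
      have hc2 : (3*(k:ℝ))^3 = 27 * (k:ℝ)^3 := by ring
      linarith only [hc1, hc2]
    -- derive m^2 * ε^4 ≥ (2/243) * n
    have hm2 : (2/243) * (n:ℝ) * (n:ℝ)^2 ≤ ((m:ℝ)^2 * ε^4) * (n:ℝ)^2 := by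
      nlinarith only [hx, hkcube]
    have hm2' : (2/243) * (n:ℝ) ≤ (m:ℝ)^2 * ε^4 :=
      le_of_mul_le_mul_right (by linarith only [hm2]) (by positivity : (0:ℝ) < (n:ℝ)^2)
    have hfin : (1/100 * Real.sqrt n / ε^2)^2 ≤ (m:ℝ)^2 := by
      have heq : (1/100 * Real.sqrt n / ε^2)^2 = (n:ℝ) / (10000 * ε^4) := by
        rw [div_pow, mul_pow, Real.sq_sqrt hnR.le]
        ring_nf
      rw [heq, div_le_iff₀ (by positivity)]
      nlinarith only [hm2']
    have := Real.sqrt_le_sqrt hfin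
    rwa [Real.sqrt_sq (by positivity), Real.sqrt_sq hm0] at this
  · -- easy case: m is huge
    push_neg at hcase
    have hminv : 1 / t < (m:ℝ) := by
      rw [div_lt_iff₀ ht0]
      linarith only [hcase]
    have htle : t ≤ 8 * ε^2 / n := by
      have hδsq : δ^2 ≤ 4 * ε^2 := by nlinarith only [hδ2ε, hδ0]
      simp only [htdef]
      rw [div_le_div_iff₀ hnR hnR]
      nlinarith only [hδsq, hnR]
    have hinvt : (n:ℝ) / (8 * ε^2) ≤ 1 / t := by
      rw [div_le_div_iff₀ (by positivity) ht0]
      calc (n:ℝ) * t ≤ n * (8 * ε^2 / n) := by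
            exact mul_le_mul_of_nonneg_left htle hnR.le
        _ = 1 * (8 * ε^2) := by field_simp
    have hm : (n:ℝ) / (8 * ε^2) ≤ (m:ℝ) := le_trans hinvt hminv.le
    calc 1/100 * Real.sqrt n / ε^2 ≤ (n:ℝ) / (8 * ε^2) := by
          rw [div_le_div_iff₀ (by positivity) (by positivity)]
          have hε2p : (0:ℝ) < ε^2 := by positivity
          nlinarith only [hsqn, hsqn0, hnR, hε2p]
      _ ≤ (m:ℝ) := hm
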